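/- For fixed κ ∈ C[0,∞), the mapping t ↦ Γ_t κ from [0,∞) to H¹(0,∞) is continuous, where (Γ_t κ)(r) = Ḡ(r)κ(t) − ∫₀ᵗ κ(s)g(t+r−s)ds. -/

import Mathlib

open MeasureTheory Set Filter Topology ENNReal

private lemma lintegral_ofReal_sq (φ : ℝ → ℝ) (μ : Measure ℝ) :
    ∫⁻ x, ENNReal.ofReal (φ x ^ 2) ∂μ = eLpNorm φ 2 μ ^ 2 := by
  rw [eLpNorm_eq_lintegral_rpow_enorm_toReal (by norm_num) (by norm_num)]
  have h2 : ((2 : ℝ≥0∞)).toReal = (2 : ℝ) := by norm_num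
  rw [h2, ← ENNReal.rpow_natCast _ 2, ← ENNReal.rpow_mul]
  norm_num
  refine lintegral_congr fun x => ?_
  rw [← ofReal_norm_eq_enorm, ← ENNReal.ofReal_pow (norm_nonneg _), Real.norm_eq_abs, sq_abs]

private lemma memLp_Phi (f : ℝ → ℝ) (hfc : Continuous f) {T : ℝ} (hT : 0 ≤ T)
    (hfin : ∫⁻ x in Ioi (0:ℝ), ENNReal.ofReal (f x ^ 2) ≠ ∞) :
    MemLp (fun r => ∫ u in r..(r + T), |f u|) 2 (volume.restrict (Ioi 0)) := by
  set Φ : ℝ → ℝ := fun r => ∫ u in r..(r + T), |f u| with hΦdef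
  have hint : ∀ a b : ℝ, IntervalIntegrable (fun u => |f u|) volume a b :=
    fun a b => (hfc.abs).intervalIntegrable a b
  have hΦcont : Continuous Φ := by
    have h1 := intervalIntegral.continuous_primitive hint 0
    have heq : Φ = fun r => (∫ u in (0:ℝ)..(r + T), |f u|) - ∫ u in (0:ℝ)..r, |f u| := by
      funext r
      rw [eq_sub_iff_add_eq, add_comm]
      exact intervalIntegral.integral_add_adjacent_intervals (hint 0 r) (hint r (r + T))
    rw [heq]
    exact (h1.comp (continuous_id.add continuous_const)).sub h1
  have hΦ0 : ∀ r, 0 ≤ Φ r :=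
    fun r => intervalIntegral.integral_nonneg (by linarith) fun u _ => abs_nonneg _
  refine ⟨hΦcont.aestronglyMeasurable, ?_⟩
  have step1 : ∀ r : ℝ, ENNReal.ofReal (Φ r ^ 2) ≤
      ENNReal.ofReal T * ∫⁻ u in Ioc (0:ℝ) T, ENNReal.ofReal (f (r + u) ^ 2) := by
    intro r
    have hΦr : Φ r = ∫ u in Ioc (0:ℝ) T, |f (r + u)| := by
      have h3 : (∫ u in (0:ℝ)..T, |f (r + u)|) = Φ r := by
        rw [intervalIntegral.integral_comp_add_left (fun u => |f u|) r]
        norm_num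
        rfl
      rw [← h3, intervalIntegral.integral_of_le hT]
    have hofr : ENNReal.ofReal (Φ r) = ∫⁻ u in Ioc (0:ℝ) T, ENNReal.ofReal |f (r + u)| := by
      rw [hΦr]
      exact ofReal_integral_eq_lintegral_ofReal
        ((hfc.comp (continuous_const.add continuous_id)).abs.integrableOn_Ioc)
        (ae_of_all _ fun u => abs_nonneg _)
    have hconj : Real.HolderConjugate 2 2 := Real.HolderConjugate.two_two
    have hmeas : AEMeasurable (fun u => ENNReal.ofReal |f (r + u)|)
        (volume.restrict (Ioc (0:ℝ) T)) :=
      (ENNReal.continuous_ofReal.comp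
        ((hfc.comp (continuous_const.add continuous_id)).abs)).measurable.aemeasurable
    have CS := ENNReal.lintegral_mul_le_Lp_mul_Lq (volume.restrict (Ioc (0:ℝ) T)) hconj
      hmeas (aemeasurable_const (b := (1:ℝ≥0∞)))
    simp only [Pi.mul_apply, mul_one, ENNReal.one_rpow, lintegral_const,
      Measure.restrict_apply_univ, one_div, one_mul] at CS
    have hνuniv : volume (Ioc (0:ℝ) T) = ENNReal.ofReal T := by
      rw [Real.volume_Ioc, sub_zero]
    rw [hνuniv] at CS
    have hpow : ∀ u : ℝ, ENNReal.ofReal |f (r + u)| ^ (2:ℝ) = ENNReal.ofReal (f (r + u) ^ 2) := by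
      intro u
      rw [ENNReal.ofReal_rpow_of_nonneg (abs_nonneg _) (by norm_num)]
      congr 1
      rw [show (2:ℝ) = ((2:ℕ):ℝ) by norm_num, Real.rpow_natCast, sq_abs]
    calc ENNReal.ofReal (Φ r ^ 2) = ENNReal.ofReal (Φ r) ^ 2 :=
          (ENNReal.ofReal_pow (hΦ0 r) 2)
      _ ≤ ((∫⁻ u in Ioc (0:ℝ) T, ENNReal.ofReal |f (r + u)| ^ (2:ℝ)) ^ (2:ℝ)⁻¹ *
            ENNReal.ofReal T ^ (2:ℝ)⁻¹) ^ 2 := by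
          rw [hofr]; exact pow_le_pow_left' CS 2
      _ = (∫⁻ u in Ioc (0:ℝ) T, ENNReal.ofReal |f (r + u)| ^ (2:ℝ)) * ENNReal.ofReal T := by
          rw [mul_pow, ← ENNReal.rpow_natCast _ 2, ← ENNReal.rpow_natCast _ 2,
            ← ENNReal.rpow_mul, ← ENNReal.rpow_mul]
          norm_num
      _ = ENNReal.ofReal T * ∫⁻ u in Ioc (0:ℝ) T, ENNReal.ofReal (f (r + u) ^ 2) := by
          rw [mul_comm]
          congr 1
          exact lintegral_congr fun u => hpow u
  have hmeas2 : AEMeasurable (Function.uncurry fun r u => ENNReal.ofReal (f (r + u) ^ 2))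
      ((volume.restrict (Ioi (0:ℝ))).prod (volume.restrict (Ioc (0:ℝ) T))) := by
    have : Continuous fun p : ℝ × ℝ => ENNReal.ofReal (f (p.1 + p.2) ^ 2) :=
      ENNReal.continuous_ofReal.comp ((hfc.comp (continuous_fst.add continuous_snd)).pow 2)
    exact this.measurable.aemeasurable
  have inner_bound : ∀ᵐ u ∂(volume.restrict (Ioc (0:ℝ) T)),
      (∫⁻ r in Ioi (0:ℝ), ENNReal.ofReal (f (r + u) ^ 2)) ≤
        ∫⁻ x in Ioi (0:ℝ), ENNReal.ofReal (f x ^ 2) := by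
    filter_upwards [ae_restrict_mem measurableSet_Ioc] with u hu
    have htrans : ∫⁻ r in Ioi (0:ℝ), ENNReal.ofReal (f (r + u) ^ 2) =
        ∫⁻ x in Ioi u, ENNReal.ofReal (f x ^ 2) := by
      rw [← lintegral_indicator measurableSet_Ioi, ← lintegral_indicator measurableSet_Ioi,
        ← lintegral_add_right_eq_self
          (fun x => (Ioi u).indicator (fun y => ENNReal.ofReal (f y ^ 2)) x) u]
      refine lintegral_congr fun r => ?_
      by_cases hr : r ∈ Ioi (0:ℝ)
      · rw [indicator_of_mem hr, indicator_of_mem (by simp only [mem_Ioi] at *; linarith)]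
      · rw [indicator_of_notMem hr, indicator_of_notMem
          (by simp only [mem_Ioi] at *; intro h; exact hr (by linarith))]
    rw [htrans]
    exact lintegral_mono_set (Ioi_subset_Ioi hu.1.le)
  have hmeasr : Measurable fun r : ℝ => ∫⁻ u in Ioc (0:ℝ) T, ENNReal.ofReal (f (r + u) ^ 2) := by
    have hc : Measurable fun p : ℝ × ℝ => ENNReal.ofReal (f (p.1 + p.2) ^ 2) :=
      (ENNReal.continuous_ofReal.comp
        ((hfc.comp (continuous_fst.add continuous_snd)).pow 2)).measurable
    exact hc.lintegral_prod_right'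

  have key : ∫⁻ r in Ioi (0:ℝ), ENNReal.ofReal (Φ r ^ 2) ≠ ∞ := by
    have hle : ∫⁻ r in Ioi (0:ℝ), ENNReal.ofReal (Φ r ^ 2) ≤
        ENNReal.ofReal T * (ENNReal.ofReal T * ∫⁻ x in Ioi (0:ℝ), ENNReal.ofReal (f x ^ 2)) := by
      calc ∫⁻ r in Ioi (0:ℝ), ENNReal.ofReal (Φ r ^ 2)
          ≤ ∫⁻ r in Ioi (0:ℝ),
              ENNReal.ofReal T * ∫⁻ u in Ioc (0:ℝ) T, ENNReal.ofReal (f (r + u) ^ 2) :=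
            lintegral_mono fun r => step1 r
        _ = ENNReal.ofReal T * ∫⁻ r in Ioi (0:ℝ),
              ∫⁻ u in Ioc (0:ℝ) T, ENNReal.ofReal (f (r + u) ^ 2) :=
            lintegral_const_mul _ hmeasr
        _ = ENNReal.ofReal T * ∫⁻ u in Ioc (0:ℝ) T,
              ∫⁻ r in Ioi (0:ℝ), ENNReal.ofReal (f (r + u) ^ 2) := by
            rw [lintegral_lintegral_swap hmeas2]
        _ ≤ ENNReal.ofReal T * ∫⁻ _u in Ioc (0:ℝ) T,
              (∫⁻ x in Ioi (0:ℝ), ENNReal.ofReal (f x ^ 2)) :=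
            mul_le_mul_right (lintegral_mono_ae inner_bound) _
        _ = ENNReal.ofReal T * (ENNReal.ofReal T * ∫⁻ x in Ioi (0:ℝ), ENNReal.ofReal (f x ^ 2)) := by
            rw [setLIntegral_const, Real.volume_Ioc, sub_zero, mul_comm (∫⁻ x in Ioi (0:ℝ), _)]
    exact ne_top_of_le_ne_top (by
      exact ENNReal.mul_ne_top ENNReal.ofReal_ne_top
        (ENNReal.mul_ne_top ENNReal.ofReal_ne_top hfin)) hle
  rcases eq_or_ne (eLpNorm Φ 2 (volume.restrict (Ioi (0:ℝ)))) ∞ with h | h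
  · exact absurd (by rw [lintegral_ofReal_sq, h]; simp) key
  · exact h.lt_top

private lemma key_aux (f w κ : ℝ → ℝ)
    (hf_cont : ContinuousOn f (Ici 0))
    (hfL2 : MemLp f 2 (volume.restrict (Ioi 0)))
    (hw : MemLp w 2 (volume.restrict (Ioi 0)))
    (hκ : ContinuousOn κ (Ici 0)) {t₀ : ℝ} (ht₀ : 0 ≤ t₀) :
    Tendsto (fun t =>
      (eLpNorm (fun r => (w r * κ t - ∫ s in (0:ℝ)..t, κ s * f (t + r - s)) -
          (w r * κ t₀ - ∫ s in (0:ℝ)..t₀, κ s * f (t₀ + r - s))) 2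
        (volume.restrict (Ioi 0))) ^ 2) (𝓝[Ici 0] t₀) (𝓝 0) := by
  set μ := volume.restrict (Ioi (0:ℝ)) with hμ
  obtain ⟨fc, hfcdef⟩ : ∃ fc : ℝ → ℝ, fc = fun x => f (max x 0) := ⟨_, rfl⟩
  obtain ⟨κc, hκcdef⟩ : ∃ κc : ℝ → ℝ, κc = fun x => κ (max x 0) := ⟨_, rfl⟩
  have hfcc : Continuous fc := by
    rw [hfcdef]
    exact hf_cont.comp_continuous (continuous_id.max continuous_const) fun x => le_max_right x 0
  have hκcc : Continuous κc := by
    rw [hκcdef]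
    exact hκ.comp_continuous (continuous_id.max continuous_const) fun x => le_max_right x 0
  obtain ⟨W, hWmeas, hWae⟩ : ∃ W : ℝ → ℝ, Measurable W ∧ w =ᵐ[μ] W :=
    ⟨hw.1.mk w, hw.1.stronglyMeasurable_mk.measurable, hw.1.ae_eq_mk⟩
  have hWL2 : MemLp W 2 μ := hw.ae_eq hWae
  obtain ⟨A, hAdef⟩ : ∃ A : ℝ → ℝ → ℝ,
      A = fun t r => ∫ s in (0:ℝ)..t, κc s * fc (t + r - s) := ⟨_, rfl⟩
  have hAcont : Continuous fun p : ℝ × ℝ => A p.1 p.2 := by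
    simp only [hAdef]
    exact intervalIntegral.continuous_parametric_intervalIntegral_of_continuous
      (f := fun (p : ℝ × ℝ) s => κc s * fc (p.1 + p.2 - s)) (μ := volume)
      ((hκcc.comp continuous_snd).mul (hfcc.comp
        (((continuous_fst.comp continuous_fst).add
          (continuous_snd.comp continuous_fst)).sub continuous_snd)))
      continuous_fst
  obtain ⟨T, hTdef⟩ : ∃ T : ℝ, T = t₀ + 1 := ⟨_, rfl⟩
  have hT0 : (0:ℝ) ≤ T := by rw [hTdef]; linarith
  obtain ⟨C, hC0, hC⟩ : ∃ C, 0 ≤ C ∧ ∀ x ∈ Icc (0:ℝ) T, |κc x| ≤ C := by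
    obtain ⟨C, hC⟩ :=
      (isCompact_Icc (a := (0:ℝ)) (b := T)).exists_bound_of_continuousOn hκcc.continuousOn
    exact ⟨max C 0, le_max_right _ _, fun x hx =>
      (Real.norm_eq_abs _ ▸ hC x hx).trans (le_max_left _ _)⟩
  obtain ⟨Φ, hΦdef⟩ : ∃ Φ : ℝ → ℝ, Φ = fun r => ∫ u in r..(r + T), |fc u| := ⟨_, rfl⟩
  have hΦ0 : ∀ r, 0 ≤ Φ r := by
    simp only [hΦdef]
    exact fun r => intervalIntegral.integral_nonneg (by linarith) fun u _ => abs_nonneg _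
  have hfc_fin : ∫⁻ x in Ioi (0:ℝ), ENNReal.ofReal (fc x ^ 2) ≠ ∞ := by
    have hcongr2 : ∫⁻ x in Ioi (0:ℝ), ENNReal.ofReal (fc x ^ 2) =
        ∫⁻ x in Ioi (0:ℝ), ENNReal.ofReal (f x ^ 2) := by
      refine setLIntegral_congr_fun measurableSet_Ioi (fun x hx => ?_)
      rw [hfcdef]; simp only [max_eq_left (le_of_lt (mem_Ioi.mp hx))]
    rw [hcongr2, lintegral_ofReal_sq]
    exact ENNReal.pow_ne_top hfL2.eLpNorm_ne_top
  have hΦL2 : MemLp Φ 2 μ := by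
    rw [hΦdef, hμ]
    exact memLp_Phi fc hfcc hT0 hfc_fin
  obtain ⟨D, hDdef⟩ : ∃ D : ℝ → ℝ, D = fun r => 2 * C * (|W r| + Φ r) := ⟨_, rfl⟩
  have hDL2 : MemLp D 2 μ := by
    have habs : MemLp (fun r => |W r|) 2 μ := by
      have := hWL2.norm
      simpa only [Real.norm_eq_abs] using this
    have hadd : MemLp (fun r => |W r| + Φ r) 2 μ := by
      have := habs.add hΦL2
      simpa [Pi.add_def] using this
    rw [hDdef]
    exact hadd.const_mul _
  have hAbound : ∀ t ∈ Icc (0:ℝ) T, ∀ r : ℝ, |A t r| ≤ C * Φ r := by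
    rintro t ⟨ht0, htT⟩ r
    simp only [hAdef, hΦdef]
    have hint2 : IntervalIntegrable (fun s => |κc s * fc (t + r - s)|) volume 0 t :=
      ((hκcc.mul (hfcc.comp (continuous_const.sub continuous_id)))).abs.intervalIntegrable 0 t
    have hint3 : IntervalIntegrable (fun s => C * |fc (t + r - s)|) volume 0 t :=
      (continuous_const.mul
        ((hfcc.comp (continuous_const.sub continuous_id)).abs)).intervalIntegrable 0 t
    calc |∫ s in (0:ℝ)..t, κc s * fc (t + r - s)|
        ≤ ∫ s in (0:ℝ)..t, |κc s * fc (t + r - s)| := by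
          rw [← Real.norm_eq_abs]
          refine (intervalIntegral.norm_integral_le_integral_norm ht0).trans_eq ?_
          simp [Real.norm_eq_abs, abs_mul]
      _ ≤ ∫ s in (0:ℝ)..t, C * |fc (t + r - s)| := by
          refine intervalIntegral.integral_mono_on ht0 hint2 hint3 fun s hs => ?_
          rw [abs_mul]
          exact mul_le_mul_of_nonneg_right (hC s ⟨hs.1, hs.2.trans htT⟩) (abs_nonneg _)
      _ = C * ∫ s in (0:ℝ)..t, |fc (t + r - s)| := by
          rw [intervalIntegral.integral_const_mul]
      _ = C * ∫ u in r..(t + r), |fc u| := by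
          rw [intervalIntegral.integral_comp_sub_left (fun u => |fc u|) (t + r)]
          norm_num
      _ ≤ C * ∫ u in r..(r + T), |fc u| := by
          refine mul_le_mul_of_nonneg_left ?_ hC0
          refine intervalIntegral.integral_mono_interval le_rfl (by linarith) (by linarith)
            (ae_of_all _ fun u => abs_nonneg _) ((hfcc.abs).intervalIntegrable r (r + T))
  obtain ⟨dif, hdif⟩ : ∃ dif : ℝ → ℝ → ℝ,
      dif = fun t r => (W r * κc t - A t r) - (W r * κc t₀ - A t₀ r) := ⟨_, rfl⟩
  have ht₀T : t₀ ∈ Icc (0:ℝ) T := ⟨ht₀, by rw [hTdef]; linarith⟩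
  have hcongr : ∀ t ∈ Ici (0:ℝ),
      eLpNorm (fun r => (w r * κ t - ∫ s in (0:ℝ)..t, κ s * f (t + r - s)) -
          (w r * κ t₀ - ∫ s in (0:ℝ)..t₀, κ s * f (t₀ + r - s))) 2 μ
        = eLpNorm (dif t) 2 μ := by
    intro t ht
    refine eLpNorm_congr_ae ?_
    filter_upwards [hWae, ae_restrict_mem measurableSet_Ioi] with r hWr hr
    rw [mem_Ioi] at hr
    have hκt : κ t = κc t := by rw [hκcdef]; simp only [max_eq_left (mem_Ici.mp ht)]
    have hκt₀ : κ t₀ = κc t₀ := by rw [hκcdef]; simp only [max_eq_left ht₀]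
    have hintc : ∀ t' : ℝ, 0 ≤ t' → (∫ s in (0:ℝ)..t', κ s * f (t' + r - s)) =
        ∫ s in (0:ℝ)..t', κc s * fc (t' + r - s) := by
      intro t' ht'
      refine intervalIntegral.integral_congr fun s hs => ?_
      rw [uIcc_of_le ht'] at hs
      have h1 : max s 0 = s := max_eq_left hs.1
      have h2 : max (t' + r - s) 0 = t' + r - s := by
        have := hs.2; exact max_eq_left (by linarith)
      rw [hκcdef, hfcdef]; dsimp only; rw [h1, h2]
    simp only [hdif, hAdef]
    rw [hWr, hκt, hκt₀, hintc t (mem_Ici.mp ht), hintc t₀ ht₀]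
  have hdifmeas : ∀ t : ℝ, Measurable fun r => ENNReal.ofReal (dif t r ^ 2) := by
    intro t
    have hA1 : Continuous fun r => A t r :=
      hAcont.comp (continuous_const.prodMk continuous_id)
    have hA2 : Continuous fun r => A t₀ r :=
      hAcont.comp (continuous_const.prodMk continuous_id)
    have h1 : Measurable fun r => dif t r := by
      simp only [hdif]
      exact ((hWmeas.mul_const _).sub hA1.measurable).sub
        ((hWmeas.mul_const _).sub hA2.measurable)
    exact (h1.pow_const 2).ennreal_ofReal
  have main : Tendsto (fun t => ∫⁻ r, ENNReal.ofReal (dif t r ^ 2) ∂μ) (𝓝[Ici 0] t₀) (𝓝 0) := by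
    have main0 : Tendsto (fun t => ∫⁻ r, ENNReal.ofReal (dif t r ^ 2) ∂μ) (𝓝[Ici 0] t₀)
        (𝓝 (∫⁻ _r, (0:ℝ≥0∞) ∂μ)) := by
      refine tendsto_lintegral_filter_of_dominated_convergence
        (fun r => ENNReal.ofReal (D r ^ 2)) (Eventually.of_forall hdifmeas) ?_ ?_ ?_
      · have h1 : ∀ᶠ (t : ℝ) in 𝓝 t₀, t < T := by
          filter_upwards [Iio_mem_nhds (show t₀ < T by rw [hTdef]; linarith)] with t ht
          exact ht
        filter_upwards [h1.filter_mono nhdsWithin_le_nhds, self_mem_nhdsWithin] with t hlt hmem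
        refine ae_of_all _ fun r => ?_
        refine ENNReal.ofReal_le_ofReal ?_
        have htIcc : t ∈ Icc (0:ℝ) T := ⟨mem_Ici.mp hmem, hlt.le⟩
        have b1 : |W r * κc t - A t r| ≤ |W r| * C + C * Φ r := by
          refine (abs_sub _ _).trans ?_
          rw [abs_mul]
          exact add_le_add (mul_le_mul_of_nonneg_left (hC t htIcc) (abs_nonneg _))
            (hAbound t htIcc r)
        have b2 : |W r * κc t₀ - A t₀ r| ≤ |W r| * C + C * Φ r := by
          refine (abs_sub _ _).trans ?_
          rw [abs_mul]
          exact add_le_add (mul_le_mul_of_nonneg_left (hC t₀ ht₀T) (abs_nonneg _))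
            (hAbound t₀ ht₀T r)
        have habs : |dif t r| ≤ D r := by
          rw [hdif, hDdef]
          dsimp only
          calc |(W r * κc t - A t r) - (W r * κc t₀ - A t₀ r)|
              ≤ |W r * κc t - A t r| + |W r * κc t₀ - A t₀ r| := abs_sub _ _
            _ ≤ (|W r| * C + C * Φ r) + (|W r| * C + C * Φ r) := add_le_add b1 b2
            _ = 2 * C * (|W r| + Φ r) := by ring
        calc dif t r ^ 2 = |dif t r| ^ 2 := (sq_abs _).symm
          _ ≤ D r ^ 2 := pow_le_pow_left₀ (abs_nonneg _) habs 2
      · rw [lintegral_ofReal_sq]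
        exact ENNReal.pow_ne_top hDL2.eLpNorm_ne_top
      · refine ae_of_all _ fun r => ?_
        have hc : Tendsto (fun t => dif t r) (𝓝 t₀) (𝓝 (dif t₀ r)) := by
          have hcont : Continuous fun t => (W r * κc t - A t r) - (W r * κc t₀ - A t₀ r) :=
            ((continuous_const.mul hκcc).sub
              (hAcont.comp (continuous_id.prodMk continuous_const))).sub continuous_const
          simpa only [hdif] using hcont.tendsto t₀
        have h0 : dif t₀ r = 0 := by rw [hdif]; exact sub_self _
        rw [h0] at hc
        have h2 : Tendsto (fun t => dif t r ^ 2) (𝓝[Ici 0] t₀) (𝓝 0) := by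
          simpa using (hc.mono_left nhdsWithin_le_nhds).pow 2
        simpa using ENNReal.tendsto_ofReal h2
    simpa using main0
  refine Tendsto.congr' ?_ main
  filter_upwards [self_mem_nhdsWithin] with t ht
  rw [hcongr t ht]
  exact lintegral_ofReal_sq _ μ

/-- Continuity of `t ↦ Γ_t κ` from `[0,∞)` into `H¹(0,∞)` for fixed continuous `κ`, where
`(Γ_t κ)(r) = Ḡ(r)κ(t) − ∫₀ᵗ κ(s)g(t+r−s)ds` with derivative
`(Γ_t κ)′(r) = −g(r)κ(t) − ∫₀ᵗ κ(s)g′(t+r−s)ds`: the squared `H¹` distance between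
`Γ_t κ` and `Γ_{t₀} κ` tends to `0` as `t → t₀` within `[0,∞)`. -/
theorem Gamma_t_time_continuous (G g g' κ : ℝ → ℝ) (H H2 : ℝ)
    (hG : ∀ x, 0 ≤ x → HasDerivAt G (g x) x)
    (hg_cont : ContinuousOn g (Ici 0))
    (hg' : ∀ x, 0 ≤ x → HasDerivAt g (g' x) x)
    (hg'_cont : ContinuousOn g' (Ici 0))
    (hgL2 : MemLp g 2 (volume.restrict (Ioi 0)))
    (hg'L2 : MemLp g' 2 (volume.restrict (Ioi 0)))
    (hH : ∀ x, 0 ≤ x → g x ≤ H * (1 - G x))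
    (hH2 : ∀ x, 0 ≤ x → |g' x| ≤ H2 * (1 - G x))
    (hGbarL2 : MemLp (fun x => 1 - G x) 2 (volume.restrict (Ioi 0)))
    (hGtailL2 : MemLp (fun x => ∫ u in Ioi x, (1 - G u)) 2 (volume.restrict (Ioi 0)))
    (hκ : ContinuousOn κ (Ici 0)) :
    ∀ t₀ ∈ Ici (0:ℝ),
      Tendsto (fun t =>
        (eLpNorm (fun r => ((1 - G r) * κ t - ∫ s in (0:ℝ)..t, κ s * g (t + r - s)) -
              ((1 - G r) * κ t₀ - ∫ s in (0:ℝ)..t₀, κ s * g (t₀ + r - s))) 2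
            (volume.restrict (Ioi 0))) ^ 2 +
          (eLpNorm (fun r => (-(g r * κ t) - ∫ s in (0:ℝ)..t, κ s * g' (t + r - s)) -
              (-(g r * κ t₀) - ∫ s in (0:ℝ)..t₀, κ s * g' (t₀ + r - s))) 2
            (volume.restrict (Ioi 0))) ^ 2)
        (𝓝[Ici 0] t₀) (𝓝 0) := by
  intro t₀ ht₀
  have h1 := key_aux g (fun r => 1 - G r) κ hg_cont hgL2 hGbarL2 hκ (mem_Ici.mp ht₀)
  have h2 := key_aux g' (fun r => -g r) κ hg'_cont hg'L2 hgL2.neg hκ (mem_Ici.mp ht₀)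
  have h2' : Tendsto (fun t =>
      (eLpNorm (fun r => (-(g r * κ t) - ∫ s in (0:ℝ)..t, κ s * g' (t + r - s)) -
          (-(g r * κ t₀) - ∫ s in (0:ℝ)..t₀, κ s * g' (t₀ + r - s))) 2
        (volume.restrict (Ioi 0))) ^ 2) (𝓝[Ici 0] t₀) (𝓝 0) := by
    simpa only [neg_mul] using h2
  simpa using h1.add h2'
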